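/- Fix positive integers n and N, an integer r with 0 ≤ r ≤ n, a real p with 0 < p < 1, a point x : Fin n → Bool, and a subset E ⊆ Fin n with |E| = r. For every x̃ : Fin n → Bool with x̃ ≠ x and every j ∈ {1,…,N}, let e_{x̃,j} be an erasure pattern of length n with parameter p, all of these patterns mutually independent. Then the expectation of (N - 1) + Σ_{x̃ ≠ x} Σ_{j=1}^{N} 1[for every i ∉ E with x i ≠ x̃ i, e_{x̃,j} i = true] equals N·2^r·(1+p)^{n-r} - 1. -/

import Mathlib

open MeasureTheory

/-- The Bernoulli measure on `Bool` giving probability `p` to `true` (an erased position). -/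
noncomputable def bernoulliMeasure (p : ℝ) : Measure Bool :=
  ENNReal.ofReal p • Measure.dirac true + ENNReal.ofReal (1 - p) • Measure.dirac false

/-- An erasure pattern of length `n` with parameter `p`: the coordinates are independent,
each erased (`= true`) with probability `p`. -/
noncomputable def erasureMeasure (n : ℕ) (p : ℝ) : Measure (Fin n → Bool) :=
  Measure.pi fun _ : Fin n => bernoulliMeasure p

lemma bern_prob (p : ℝ) (hp0 : 0 ≤ p) (hp1 : p ≤ 1) :
    IsProbabilityMeasure (bernoulliMeasure p) := by
  constructor
  simp [bernoulliMeasure, ← ENNReal.ofReal_add hp0 (by linarith : (0:ℝ) ≤ 1 - p)]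

lemma bern_true (p : ℝ) : bernoulliMeasure p {true} = ENNReal.ofReal p := by
  simp [bernoulliMeasure, Measure.dirac_apply' _ (by trivial : MeasurableSet ({true} : Set Bool))]

lemma cyl_measure (n : ℕ) (p : ℝ) (hp0 : 0 ≤ p) (hp1 : p ≤ 1) (S : Finset (Fin n)) :
    erasureMeasure n p {e : Fin n → Bool | ∀ i ∈ S, e i = true}
      = ENNReal.ofReal p ^ S.card := by
  haveI := bern_prob p hp0 hp1
  have hset : {e : Fin n → Bool | ∀ i ∈ S, e i = true}
      = Set.pi Set.univ (fun i => if i ∈ S then ({true} : Set Bool) else Set.univ) := by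
    ext e
    simp only [Set.mem_setOf_eq, Set.mem_pi, Set.mem_univ, true_implies]
    constructor
    · intro h i; split <;> simp_all
    · intro h i hi; have := h i; simp [hi] at this; exact this
  rw [erasureMeasure, hset, Measure.pi_pi]
  have : ∀ i : Fin n, bernoulliMeasure p (if i ∈ S then ({true} : Set Bool) else Set.univ)
      = if i ∈ S then ENNReal.ofReal p else 1 := by
    intro i; split
    · exact bern_true p
    · exact measure_univ
  simp_rw [this]
  rw [Finset.prod_ite_mem, Finset.univ_inter, Finset.prod_const]

lemma sum_pow_filter {n : ℕ} (p : ℝ) (x : Fin n → Bool) (E : Finset (Fin n)) :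
    ∑ x' : Fin n → Bool,
      p ^ (Finset.univ.filter (fun i => i ∉ E ∧ x i ≠ x' i)).card
      = 2 ^ E.card * (1 + p) ^ (n - E.card) := by
  have h1 : ∀ x' : Fin n → Bool,
      p ^ (Finset.univ.filter (fun i => i ∉ E ∧ x i ≠ x' i)).card
      = ∏ i : Fin n, (if i ∉ E ∧ x i ≠ x' i then p else 1) := by
    intro x'
    rw [Finset.prod_ite, Finset.prod_const, Finset.prod_const, one_pow, mul_one]
  simp_rw [h1]
  rw [← Fintype.piFinset_univ, ← Finset.prod_univ_sum (fun _ : Fin n => (Finset.univ : Finset Bool)) (fun i b => if i ∉ E ∧ x i ≠ b then p else 1)]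
  have h2 : ∀ i : Fin n, (∑ b : Bool, if i ∉ E ∧ x i ≠ b then p else 1)
      = if i ∈ E then 2 else 1 + p := by
    intro i
    rw [Fintype.sum_bool]
    by_cases hiE : i ∈ E
    · simp [hiE]; norm_num
    · cases hx : x i <;> simp [hiE, hx] <;> ring
  simp_rw [h2]
  rw [Finset.prod_ite, Finset.prod_const, Finset.prod_const]
  congr 2
  · simp
  · have : Finset.filter (fun i => i ∉ E) Finset.univ = Eᶜ := by
      ext i; simp
    rw [this, Finset.card_compl, Fintype.card_fin]

/-- Fix `x : Fin n → Bool` and a set `E ⊆ Fin n` of `r` erased positions.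
For each address `x̃ ≠ x` and each `j ∈ {1,…,N}`, let `e_{x̃,j}` be an independent erasure
pattern of length `n` with parameter `p`.  Then the expectation of
`(N-1) + Σ_{x̃ ≠ x} Σ_{j=1}^{N} 1[∀ i ∉ E with x i ≠ x̃ i, e_{x̃,j} i = true]`
equals `N·2^r·(1+p)^{n-r} - 1`. -/
theorem stmt_12 (n N : ℕ) (hn : 0 < n) (hN : 0 < N) (r : ℕ) (hr : r ≤ n)
    (p : ℝ) (hp0 : 0 < p) (hp1 : p < 1) (x : Fin n → Bool)
    (E : Finset (Fin n)) (hE : E.card = r) :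
    (∫ ω : {x' : Fin n → Bool // x' ≠ x} × Fin N → (Fin n → Bool),
      (((N : ℝ) - 1) + ∑ x' : {x' : Fin n → Bool // x' ≠ x}, ∑ j : Fin N,
        (if ∀ i : Fin n, i ∉ E → x i ≠ x'.1 i → ω (x', j) i = true then (1 : ℝ) else 0))
      ∂(Measure.pi fun _ : {x' : Fin n → Bool // x' ≠ x} × Fin N => erasureMeasure n p))
      = (N : ℝ) * 2 ^ r * (1 + p) ^ (n - r) - 1 := by
  classical
  haveI := bern_prob p hp0.le hp1.le
  haveI : IsProbabilityMeasure (erasureMeasure n p) := by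
    rw [erasureMeasure]; infer_instance
  set K := {x' : Fin n → Bool // x' ≠ x} × Fin N
  set μ := Measure.pi fun _ : K => erasureMeasure n p with hμ
  haveI : IsProbabilityMeasure μ := by rw [hμ]; infer_instance
  -- the cylinder set for a given address
  set B : (Fin n → Bool) → Set (Fin n → Bool) :=
    fun x'' => {e | ∀ i, i ∉ E → x i ≠ x'' i → e i = true} with hB
  have hBmeas : ∀ x'', MeasurableSet (B x'') := fun x'' =>
    (Set.to_countable _).measurableSet
  set A : K → Set (K → (Fin n → Bool)) :=
    fun k => Function.eval k ⁻¹' (B k.1.1) with hA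
  have hAmeas : ∀ k, MeasurableSet (A k) := fun k =>
    (measurable_pi_apply k) (hBmeas _)
  -- measure of A k
  have hBmeasure : ∀ x'', erasureMeasure n p (B x'')
      = ENNReal.ofReal p ^ (Finset.univ.filter (fun i => i ∉ E ∧ x i ≠ x'' i)).card := by
    intro x''
    have : B x'' = {e : Fin n → Bool |
        ∀ i ∈ Finset.univ.filter (fun i => i ∉ E ∧ x i ≠ x'' i), e i = true} := by
      ext e; simp [hB]
    rw [this, cyl_measure n p hp0.le hp1.le]
  have hAmeasure : ∀ k : K, μ (A k)
      = ENNReal.ofReal p ^ (Finset.univ.filter (fun i => i ∉ E ∧ x i ≠ k.1.1 i)).card := by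
    intro k
    rw [hA]
    simp only
    rw [Set.eval_preimage, hμ, Measure.pi_pi]
    rw [Finset.prod_eq_single k
      (fun b _ hb => by rw [Function.update_of_ne hb]; exact measure_univ)
      (fun hk => absurd (Finset.mem_univ k) hk)]
    rw [Function.update_self]
    exact hBmeasure _
  -- each indicator term
  have hterm : ∀ k : K,
      (fun ω : K → (Fin n → Bool) =>
        (if ∀ i : Fin n, i ∉ E → x i ≠ k.1.1 i → ω k i = true then (1 : ℝ) else 0))
      = (A k).indicator (fun _ => (1 : ℝ)) := by
    intro k; funext ω
    by_cases h : ω ∈ A k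
    · rw [Set.indicator_of_mem h]; exact if_pos h
    · rw [Set.indicator_of_notMem h]; exact if_neg h
  have hint : ∀ k : K, Integrable ((A k).indicator (fun _ => (1 : ℝ))) μ :=
    fun k => (integrable_const 1).indicator (hAmeas k)
  have hIterm : ∀ k : K, ∫ ω, (A k).indicator (fun _ => (1 : ℝ)) ω ∂μ
      = p ^ (Finset.univ.filter (fun i => i ∉ E ∧ x i ≠ k.1.1 i)).card := by
    intro k
    rw [integral_indicator_const (1 : ℝ) (hAmeas k)]
    show (μ (A k)).toReal • (1 : ℝ) = _
    rw [hAmeasure k]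
    simp [ENNReal.toReal_pow, ENNReal.toReal_ofReal hp0.le]
  -- rewrite the integrand
  have hrw : (fun ω : K → (Fin n → Bool) =>
      (((N : ℝ) - 1) + ∑ x' : {x' : Fin n → Bool // x' ≠ x}, ∑ j : Fin N,
        (if ∀ i : Fin n, i ∉ E → x i ≠ x'.1 i → ω (x', j) i = true then (1 : ℝ) else 0)))
      = (fun ω => ((N : ℝ) - 1) + ∑ x' : {x' : Fin n → Bool // x' ≠ x}, ∑ j : Fin N,
          (A (x', j)).indicator (fun _ => (1 : ℝ)) ω) := by
    funext ω
    congr 1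
    refine Finset.sum_congr rfl fun x' _ => Finset.sum_congr rfl fun j _ => ?_
    exact congrFun (hterm (x', j)) ω
  rw [hrw]
  have hint2 : Integrable (fun ω => ∑ x' : {x' : Fin n → Bool // x' ≠ x}, ∑ j : Fin N,
      (A (x', j)).indicator (fun _ => (1 : ℝ)) ω) μ :=
    integrable_finset_sum _ fun x' _ => integrable_finset_sum _ fun j _ => hint (x', j)
  rw [integral_add (integrable_const _) hint2, integral_const]
  rw [integral_finset_sum _ fun x' _ => integrable_finset_sum _ fun j _ => hint (x', j)]
  have : ∀ x' : {x' : Fin n → Bool // x' ≠ x},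
      ∫ ω, (∑ j : Fin N, (A (x', j)).indicator (fun _ => (1 : ℝ)) ω) ∂μ
      = (N : ℝ) * p ^ (Finset.univ.filter (fun i => i ∉ E ∧ x i ≠ x'.1 i)).card := by
    intro x'
    rw [integral_finset_sum _ fun j _ => hint (x', j)]
    have hc : ∀ j : Fin N, ∫ ω, (A (x', j)).indicator (fun _ => (1:ℝ)) ω ∂μ
        = p ^ (Finset.univ.filter (fun i => i ∉ E ∧ x i ≠ x'.1 i)).card :=
      fun j => hIterm (x', j)
    rw [Finset.sum_congr rfl (fun j _ => hc j), Finset.sum_const, Finset.card_univ,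
      Fintype.card_fin, nsmul_eq_mul]
  simp_rw [this]
  rw [← Finset.mul_sum]
  -- sum over the subtype
  have hsub : ∑ x' : {x' : Fin n → Bool // x' ≠ x},
      p ^ (Finset.univ.filter (fun i => i ∉ E ∧ x i ≠ x'.1 i)).card
      = 2 ^ r * (1 + p) ^ (n - r) - 1 := by
    rw [← Finset.sum_subtype (Finset.univ.erase x)
      (fun a => by simp [Finset.mem_erase]) (fun x'' =>
        p ^ (Finset.univ.filter (fun i => i ∉ E ∧ x i ≠ x'' i)).card)]
    have := Finset.sum_erase_add Finset.univ (fun x'' =>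
        p ^ (Finset.univ.filter (fun i => i ∉ E ∧ x i ≠ x'' i)).card) (Finset.mem_univ x)
    have hx : p ^ (Finset.univ.filter (fun i => i ∉ E ∧ x i ≠ x i)).card = 1 := by
      simp
    rw [hx] at this
    rw [sum_pow_filter p x E, hE] at this
    linarith
  rw [hsub]
  simp [measure_univ]
  ring
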